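/- For integers k ≥ 1 and m ≥ 1, define χ : R_{k,m} → ℤ by χ(x) = (-1)^{N(x)}, where N(x) is the number of nonzero coefficients c_{ij} in the unique representation x = Σ_{0≤i≤k-1, 0≤j≤m-1} c_{ij} u^i v^j with c_{ij} ∈ F_2. Then χ is an additive character of (R_{k,m}, +), i.e., χ(x + y) = χ(x)·χ(y) for all x, y, and the restriction of χ to every nonzero ideal of R_{k,m} is nontrivial (for every nonzero ideal I there exists x ∈ I with χ(x) = -1); that is, χ is a generating character for R_{k,m}. -/

import Mathlib

open MvPolynomial

/-- The ring `R_{k,m} = F_2[u,v]/⟨u^k, v^m⟩`. -/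
noncomputable abbrev Rkm (k m : ℕ) : Type :=
  MvPolynomial (Fin 2) (ZMod 2) ⧸
    (Ideal.span {(X 0 : MvPolynomial (Fin 2) (ZMod 2)) ^ k, (X 1 : MvPolynomial (Fin 2) (ZMod 2)) ^ m})

/-- `u`, the image of `X 0` in `R_{k,m}`. -/
noncomputable def Rkm.u (k m : ℕ) : Rkm k m := Ideal.Quotient.mk _ (X 0)

/-- `v`, the image of `X 1` in `R_{k,m}`. -/
noncomputable def Rkm.v (k m : ℕ) : Rkm k m := Ideal.Quotient.mk _ (X 1)



lemma Rkm.u_pow_zero (k m a : ℕ) (ha : k ≤ a) : Rkm.u k m ^ a = 0 := by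
  have h : Rkm.u k m ^ k = 0 := by
    rw [Rkm.u, ← map_pow, Ideal.Quotient.eq_zero_iff_mem]
    exact Ideal.subset_span (by simp)
  calc Rkm.u k m ^ a = Rkm.u k m ^ k * Rkm.u k m ^ (a - k) := by
        rw [← pow_add]; congr 1; omega
    _ = 0 := by rw [h, zero_mul]

lemma Rkm.v_pow_zero (k m a : ℕ) (ha : m ≤ a) : Rkm.v k m ^ a = 0 := by
  have h : Rkm.v k m ^ m = 0 := by
    rw [Rkm.v, ← map_pow, Ideal.Quotient.eq_zero_iff_mem]
    exact Ideal.subset_span (by simp)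
  calc Rkm.v k m ^ a = Rkm.v k m ^ m * Rkm.v k m ^ (a - m) := by
        rw [← pow_add]; congr 1; omega
    _ = 0 := by rw [h, zero_mul]

lemma sign_eq : ∀ c : ZMod 2, (if c ≠ 0 then (-1:ℤ) else 1) = (-1:ℤ) ^ c.val := by decide

lemma sign_add : ∀ a b : ZMod 2, (-1:ℤ) ^ (a + b).val = (-1:ℤ) ^ a.val * (-1:ℤ) ^ b.val := by
  decide

set_option synthInstance.maxHeartbeats 1000000
set_option maxHeartbeats 1000000

/-- Given the `F_2`-basis `u^i v^j` of `R_{k,m}`, the map `χ(x) = (-1)^{N(x)}`, where `N(x)`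
is the number of nonzero coefficients of `x` in this basis, is an additive character of
`(R_{k,m},+)` whose restriction to every nonzero ideal is nontrivial; i.e. `χ` is a
generating character for `R_{k,m}`. -/
theorem Rkm_generating_character (k m : ℕ) (hk : 1 ≤ k) (hm : 1 ≤ m)
    (B : Module.Basis (Fin k × Fin m) (ZMod 2) (Rkm k m))
    (hB : ∀ p : Fin k × Fin m, B p = Rkm.u k m ^ (p.1 : ℕ) * Rkm.v k m ^ (p.2 : ℕ))
    (χ : Rkm k m → ℤ)
    (hχ : ∀ x : Rkm k m,
      χ x = (-1 : ℤ) ^ (Finset.univ.filter fun p : Fin k × Fin m => B.repr x p ≠ 0).card) :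
    (∀ x y : Rkm k m, χ (x + y) = χ x * χ y) ∧
    (∀ I : Ideal (Rkm k m), I ≠ ⊥ → ∃ x ∈ I, χ x = -1) := by
  have key : ∀ x : Rkm k m, χ x = ∏ p : Fin k × Fin m, (-1:ℤ) ^ (B.repr x p).val := by
    intro x
    rw [hχ, ← Finset.prod_const, Finset.prod_filter]
    exact Finset.prod_congr rfl fun p _ => sign_eq _
  constructor
  · intro x y
    rw [key, key, key, ← Finset.prod_mul_distrib]
    refine Finset.prod_congr rfl fun p _ => ?_
    rw [map_add, Finsupp.add_apply, sign_add]
  · intro I hI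
    obtain ⟨x, hxI, hx0⟩ := Submodule.ne_bot_iff I |>.mp hI
    set c := B.repr x with hc
    have hsupp : c.support.Nonempty := by
      rw [Finsupp.support_nonempty_iff]
      intro h
      exact hx0 (by rwa [← B.repr.map_eq_zero_iff])
    set T : Finset ℕ := c.support.image fun p => (p.1 : ℕ) with hT
    have hTne : T.Nonempty := hsupp.image _
    set i := T.min' hTne with hi
    set T2 : Finset ℕ := (c.support.filter fun p => (p.1 : ℕ) = i).image fun p => (p.2 : ℕ)
      with hT2
    have hT2ne : T2.Nonempty := by
      obtain ⟨p, hp, hpi⟩ := Finset.mem_image.mp (T.min'_mem hTne)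
      exact ⟨(p.2 : ℕ), Finset.mem_image.mpr ⟨p, Finset.mem_filter.mpr ⟨hp, hpi⟩, rfl⟩⟩
    set j := T2.min' hT2ne with hj
    obtain ⟨p₀, hp₀, hp₀j⟩ := Finset.mem_image.mp (T2.min'_mem hT2ne)
    rw [Finset.mem_filter] at hp₀
    have hp₀s : p₀ ∈ c.support := hp₀.1
    have hp₀i : (p₀.1 : ℕ) = i := hp₀.2
    have hik : i < k := hp₀i ▸ p₀.1.isLt
    have hjm : j < m := by rw [hj, ← hp₀j]; exact p₀.2.isLt
    have hmin1 : ∀ p ∈ c.support, i ≤ (p.1 : ℕ) := fun p hp =>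
      T.min'_le _ (Finset.mem_image.mpr ⟨p, hp, rfl⟩)
    have hmin2 : ∀ p ∈ c.support, (p.1 : ℕ) = i → j ≤ (p.2 : ℕ) := fun p hp hpi =>
      T2.min'_le _ (Finset.mem_image.mpr ⟨p, Finset.mem_filter.mpr ⟨hp, hpi⟩, rfl⟩)
    set w : Rkm k m := Rkm.u k m ^ (k - 1 - i) * Rkm.v k m ^ (m - 1 - j) * x with hw
    have expand : ∀ p : Fin k × Fin m,
        Rkm.u k m ^ (k - 1 - i) * Rkm.v k m ^ (m - 1 - j) *
          (Rkm.u k m ^ (p.1 : ℕ) * Rkm.v k m ^ (p.2 : ℕ)) =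
        Rkm.u k m ^ ((k - 1 - i) + (p.1 : ℕ)) * Rkm.v k m ^ ((m - 1 - j) + (p.2 : ℕ)) := by
      intro p
      rw [pow_add, pow_add]; ring
    have hwval : w = Rkm.u k m ^ (k - 1) * Rkm.v k m ^ (m - 1) := by
      have hx : x = ∑ p : Fin k × Fin m, c p • B p := (B.sum_repr x).symm
      rw [hw, hx, Finset.mul_sum]
      have step : ∀ p : Fin k × Fin m,
          Rkm.u k m ^ (k - 1 - i) * Rkm.v k m ^ (m - 1 - j) * (c p • B p) =
          c p • (Rkm.u k m ^ ((k - 1 - i) + (p.1 : ℕ)) *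
            Rkm.v k m ^ ((m - 1 - j) + (p.2 : ℕ))) := by
        intro p
        rw [mul_smul_comm, hB p, expand p]
      simp only [step]
      rw [Finset.sum_eq_single p₀]
      · have hc1 : c p₀ = 1 := by
          have hne := Finsupp.mem_support_iff.mp hp₀s
          revert hne; generalize c p₀ = a; revert a; decide
        rw [hc1, one_smul]
        congr 1 <;> congr 1 <;> omega
      · intro p _ hpne
        by_cases hps : p ∈ c.support
        · have h1 := hmin1 p hps
          rcases lt_or_eq_of_le h1 with h1' | h1'
          · rw [Rkm.u_pow_zero k m _ (by omega), zero_mul, smul_zero]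
          · have h2 := hmin2 p hps h1'.symm
            rcases lt_or_eq_of_le h2 with h2' | h2'
            · rw [Rkm.v_pow_zero k m _ (by omega), mul_zero, smul_zero]
            · exfalso; apply hpne
              have e1 : p.1 = p₀.1 := Fin.ext (by omega)
              have e2 : p.2 = p₀.2 := Fin.ext (by omega)
              exact Prod.ext e1 e2
        · rw [Finsupp.notMem_support_iff.mp hps, zero_smul]
      · intro h; exact absurd (Finset.mem_univ p₀) h
    refine ⟨w, I.mul_mem_left _ hxI, ?_⟩
    have hq : w = B (⟨k - 1, by omega⟩, ⟨m - 1, by omega⟩) := by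
      rw [hB]; exact hwval
    rw [hχ, hq, B.repr_self]
    have hfilt : (Finset.univ.filter fun p : Fin k × Fin m =>
        Finsupp.single ((⟨k - 1, by omega⟩, ⟨m - 1, by omega⟩) : Fin k × Fin m) (1 : ZMod 2) p ≠ 0)
        = {((⟨k - 1, by omega⟩, ⟨m - 1, by omega⟩) : Fin k × Fin m)} := by
      ext q
      simp only [Finset.mem_filter, Finset.mem_univ, true_and, Finset.mem_singleton]
      rw [Finsupp.single_apply]
      split_ifs with h
      · simp [h]
      · simpa [eq_comm] using h
    rw [hfilt, Finset.card_singleton, pow_one]
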